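/- Suppose a graph G with orientation O admits an integer-valued 2-flow φ₂ (i.e. |φ₂(e)| ≤ 1 for all edges and Kirchhoff's law holds) and an integer-valued 3-flow φ₃ (|φ₃(e)| ≤ 2, Kirchhoff's law) such that for every edge e, φ₂(e) ≠ 0 or φ₃(e) ≠ 0. Then the assignment φ(e) = (φ₂(e), φ₃(e)) ∈ ℝ² is a (1+√5, 2)-NZF on G: Kirchhoff's law holds at every vertex and 1 ≤ ‖φ(e)‖ ≤ √5 for every edge e. -/

import Mathlib

open scoped BigOperators

noncomputable section

/-- The vector `(x, y)` in the Euclidean plane `ℝ²`. -/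
def vec2 (x y : ℝ) : EuclideanSpace ℝ (Fin 2) := (WithLp.equiv 2 (Fin 2 → ℝ)).symm ![x, y]

/-- `f` is a `d`-dimensional nowhere-zero `r`-flow ((r,d)-NZF) on the graph `G`.
We encode an orientation together with a flow as a skew-symmetric function on ordered
pairs of vertices, supported on adjacent pairs, whose values (on edges) have Euclidean
norm in `[1, r-1]`, and which satisfies Kirchhoff's law at every vertex. -/
def IsNZF {V : Type} [Fintype V] (G : SimpleGraph V) (d : ℕ) (r : ℝ)
    (f : V → V → EuclideanSpace ℝ (Fin d)) : Prop :=
  (∀ u v, f u v = - f v u) ∧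
  (∀ u v, ¬ G.Adj u v → f u v = 0) ∧
  (∀ u v, G.Adj u v → 1 ≤ ‖f u v‖ ∧ ‖f u v‖ ≤ r - 1) ∧
  (∀ v, ∑ u, f v u = 0)

/-- `G` admits an `(r,d)`-NZF. -/
def HasNZF {V : Type} [Fintype V] (G : SimpleGraph V) (d : ℕ) (r : ℝ) : Prop :=
  ∃ f, IsNZF G d r f

/-- A graph is bridgeless if none of its edges is a bridge. -/
def Bridgeless {V : Type} (G : SimpleGraph V) : Prop :=
  ∀ e ∈ G.edgeSet, ¬ G.IsBridge e

/-- If a graph `G` has an integer 2-flow `φ₂` and an integer 3-flow `φ₃` (both encoded as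
skew-symmetric functions supported on edges and satisfying Kirchhoff's law) such that on
every edge at least one of them is nonzero, then `e ↦ (φ₂ e, φ₃ e) ∈ ℝ²` is a
`(1+√5, 2)`-NZF on `G`. -/
lemma vec2_norm (x y : ℝ) : ‖vec2 x y‖ = Real.sqrt (x^2 + y^2) := by
  rw [EuclideanSpace.norm_eq]
  congr 1
  simp [vec2, Fin.sum_univ_two, sq_abs, sq]

lemma vec2_neg (x y : ℝ) : vec2 (-x) (-y) = - vec2 x y := by
  simp only [vec2]
  ext i
  fin_cases i <;> simp

lemma vec2_zero : vec2 0 0 = 0 := by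
  simp only [vec2]
  ext i
  fin_cases i <;> simp

lemma vec2_sum {V : Type} [Fintype V] (a b : V → ℝ) :
    ∑ u, vec2 (a u) (b u) = vec2 (∑ u, a u) (∑ u, b u) := by
  simp only [vec2]
  ext i
  rw [WithLp.ofLp_sum, Finset.sum_apply]
  fin_cases i <;> simp

theorem stmt_4 {V : Type} [Fintype V] (G : SimpleGraph V) (φ₂ φ₃ : V → V → ℤ)
    (hskew₂ : ∀ u v, φ₂ u v = - φ₂ v u) (hskew₃ : ∀ u v, φ₃ u v = - φ₃ v u)
    (hsupp₂ : ∀ u v, ¬ G.Adj u v → φ₂ u v = 0) (hsupp₃ : ∀ u v, ¬ G.Adj u v → φ₃ u v = 0)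
    (hbd₂ : ∀ u v, |φ₂ u v| ≤ 1) (hbd₃ : ∀ u v, |φ₃ u v| ≤ 2)
    (hK₂ : ∀ v, ∑ u, φ₂ v u = 0) (hK₃ : ∀ v, ∑ u, φ₃ v u = 0)
    (hnz : ∀ u v, G.Adj u v → φ₂ u v ≠ 0 ∨ φ₃ u v ≠ 0) :
    IsNZF G 2 (1 + Real.sqrt 5) (fun u v => vec2 (φ₂ u v) (φ₃ u v)) := by
  refine ⟨fun u v => ?_, fun u v h => ?_, fun u v h => ?_, fun v => ?_⟩
  · simp only
    rw [hskew₂ u v, hskew₃ u v]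
    push_cast
    exact vec2_neg _ _
  · simp only
    rw [hsupp₂ u v h, hsupp₃ u v h]
    exact_mod_cast vec2_zero
  · simp only
    rw [vec2_norm]
    have a2 : |(φ₂ u v : ℝ)| ≤ 1 := by exact_mod_cast hbd₂ u v
    have a3 : |(φ₃ u v : ℝ)| ≤ 2 := by exact_mod_cast hbd₃ u v
    have hge : (1:ℝ) ≤ (φ₂ u v:ℝ)^2 + (φ₃ u v:ℝ)^2 := by
      rcases hnz u v h with hn | hn
      · have h1 : (1:ℝ) ≤ |(φ₂ u v:ℝ)| := by exact_mod_cast Int.one_le_abs hn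
        nlinarith [sq_abs ((φ₂ u v:ℝ)), abs_nonneg ((φ₂ u v:ℝ)), sq_nonneg ((φ₃ u v:ℝ))]
      · have h1 : (1:ℝ) ≤ |(φ₃ u v:ℝ)| := by exact_mod_cast Int.one_le_abs hn
        nlinarith [sq_abs ((φ₃ u v:ℝ)), abs_nonneg ((φ₃ u v:ℝ)), sq_nonneg ((φ₂ u v:ℝ))]
    have hle : (φ₂ u v:ℝ)^2 + (φ₃ u v:ℝ)^2 ≤ 5 := by
      nlinarith [sq_abs ((φ₂ u v:ℝ)), sq_abs ((φ₃ u v:ℝ)), abs_nonneg ((φ₂ u v:ℝ)), abs_nonneg ((φ₃ u v:ℝ))]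
    constructor
    · calc (1:ℝ) = Real.sqrt 1 := Real.sqrt_one.symm
        _ ≤ _ := Real.sqrt_le_sqrt hge
    · calc Real.sqrt _ ≤ Real.sqrt 5 := Real.sqrt_le_sqrt hle
        _ = 1 + Real.sqrt 5 - 1 := by ring
  · simp only
    have e2 : ∑ u, ((φ₂ v u : ℝ)) = 0 := by exact_mod_cast congrArg (Int.cast : ℤ → ℝ) (hK₂ v)
    have e3 : ∑ u, ((φ₃ v u : ℝ)) = 0 := by exact_mod_cast congrArg (Int.cast : ℤ → ℝ) (hK₃ v)
    rw [vec2_sum, e2, e3]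
    exact vec2_zero
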